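/- arXiv:1608.07600 — 3 statements merged into one kernel-verified Lean document; each statement's English description precedes it below -/
import Mathlib

section
/- Let R be a Noetherian ring, I an ideal, and x ∈ R. For every k ≥ 0 there is an isomorphism of R-modules (I + (x^k))/(I + (x^{k+1})) ≅ R/((I : x^k) + (x)). Consequently, if R/(I,x^n) has finite length for all n, then length(R/(I, x^{k+1})) = length(R/(I, x^k)) + length(R/((I : x^k) + (x))). -/
open Filter IsLocalRing

noncomputable section

variable {R : Type*} [CommRing R]

/-- The `q`-th Frobenius power `I^{[q]}` of an ideal `I`. -/
def fpow (I : Ideal R) (q : ℕ) : Ideal R := Ideal.span ((fun x => x ^ q) '' (I : Set R))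

/-- The length of `R ⧸ I` as an `R`-module, as a natural number. -/
def qlen (I : Ideal R) : ℕ := (WithBot.unbotD 0 (Order.krullDim (Submodule R (R ⧸ I)))).toNat

/-- The length of `R ⧸ I` as an `R`-module, in `ℕ∞`. -/
def lenE (I : Ideal R) : ℕ∞ := WithBot.unbotD 0 (Order.krullDim (Submodule R (R ⧸ I)))

/-- The tight closure `I*` of an ideal `I` in a ring of characteristic `p`. -/
def tightClosure (p : ℕ) (I : Ideal R) : Ideal R :=
  Ideal.span {x | ∃ c : R, (∀ P ∈ minimalPrimes R, c ∉ P) ∧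
    ∃ e₀ : ℕ, ∀ e ≥ e₀, c * x ^ p ^ e ∈ fpow I (p ^ e)}

/-- `c` is a test element: `c` avoids all minimal primes and for every ideal `I`,
`x ∈ I*` iff `c x^q ∈ I^{[q]}` for all `q = p^e`. -/
def IsTestElement (p : ℕ) (c : R) : Prop :=
  (∀ P ∈ minimalPrimes R, c ∉ P) ∧
    ∀ (I : Ideal R) (x : R), x ∈ tightClosure p I ↔ ∀ e : ℕ, c * x ^ p ^ e ∈ fpow I (p ^ e)

end


section JHAux

variable {R : Type*} [Ring R] {X : Type*} [AddCommGroup X] [Module R X]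

lemma aux_head_eq_last_of_length_zero {α : Type*} {r : SetRel α α}
    (p : RelSeries r) (h : p.length = 0) : p.head = p.last :=
  congrArg p.toFun (Fin.ext (by simp [RelSeries.head, RelSeries.last, h]))

/-- Between `a ≤ b` there is a series of covers. -/
lemma aux_exists_covSeries [IsNoetherian R X] [IsArtinian R X] (b : Submodule R X) :
    ∀ a : Submodule R X, a ≤ b →
      ∃ t : CompositionSeries (Submodule R X), t.head = a ∧ t.last = b := by
  have wf : WellFounded ((· > ·) : Submodule R X → Submodule R X → Prop) := IsWellFounded.wf
  intro a
  induction a using wf.induction with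
  | _ a ih =>
    intro hab
    rcases eq_or_lt_of_le hab with rfl | hlt
    · exact ⟨RelSeries.singleton _ a, rfl, rfl⟩
    · obtain ⟨d, ⟨had, hdb⟩, hmin⟩ :=
        (IsWellFounded.wf (r := ((· < ·) : Submodule R X → Submodule R X → Prop))).has_min
          {d | a < d ∧ d ≤ b} ⟨b, hlt, le_rfl⟩
      obtain ⟨t, ht1, ht2⟩ := ih d had hdb
      have hcov : a ⋖ d := ⟨had, fun {c} hac hcd => hmin c ⟨hac, hcd.le.trans hdb⟩ hcd⟩
      refine ⟨t.cons a (show JordanHolderLattice.IsMaximal a t.head from ht1 ▸ hcov), ?_, ?_⟩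
      · simp
      · rwa [RelSeries.last_cons]

/-- Refine an `LTSeries` to a composition series of at least the same length. -/
lemma aux_refine [IsNoetherian R X] [IsArtinian R X] (p : LTSeries (Submodule R X)) :
    ∃ q : CompositionSeries (Submodule R X),
      q.head = p.head ∧ q.last = p.last ∧ p.length ≤ q.length := by
  obtain ⟨n, hn⟩ : ∃ n, p.length = n := ⟨_, rfl⟩
  induction n generalizing p with
  | zero =>
    exact ⟨RelSeries.singleton _ p.head, rfl,
      (aux_head_eq_last_of_length_zero p hn).symm ▸ rfl, by omega⟩
  | succ n ih =>
    obtain ⟨q, hq1, hq2, hq3⟩ := ih p.eraseLast (by simp [hn])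
    have hne : p.length ≠ 0 := by omega
    have hlt : p.eraseLast.last < p.last := p.eraseLast_last_rel_last hne
    obtain ⟨t, ht1, ht2⟩ := aux_exists_covSeries p.last p.eraseLast.last hlt.le
    have htpos : 0 < t.length := by
      rcases Nat.eq_zero_or_pos t.length with h | h
      · exact absurd (ht1 ▸ (aux_head_eq_last_of_length_zero t h) ▸ ht2) hlt.ne
      · exact h
    refine ⟨q.smash t (hq2.trans ht1.symm), by simpa using hq1, by simpa using ht2, ?_⟩
    have : p.eraseLast.length = n := by simp [hn]
    simp only [RelSeries.smash_length]
    omega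

/-- Any `LTSeries` is no longer than a composition series from `⊥` to `⊤`. -/
lemma aux_ltSeries_le [IsNoetherian R X] [IsArtinian R X]
    (s : CompositionSeries (Submodule R X)) (hh : s.head = ⊥) (hl : s.last = ⊤)
    (p : LTSeries (Submodule R X)) : p.length ≤ s.length := by
  obtain ⟨q, hq1, hq2, hq3⟩ := aux_refine p
  obtain ⟨t0, ht01, ht02⟩ := aux_exists_covSeries p.head ⊥ bot_le
  obtain ⟨t2, ht21, ht22⟩ := aux_exists_covSeries ⊤ p.last le_top
  let u := (t0.smash q (ht02.trans hq1.symm)).smash t2 (by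
    rw [RelSeries.last_smash, hq2, ht21])
  have hlen := (CompositionSeries.jordan_holder u s
    (by simp only [u, RelSeries.head_smash]; rw [ht01, hh])
    (by simp only [u, RelSeries.last_smash]; rw [ht22, hl])).length_eq
  have : u.length = t0.length + q.length + t2.length := by
    simp [u, RelSeries.smash_length]
  omega

lemma aux_krullDim_eq [IsNoetherian R X] [IsArtinian R X]
    (s : CompositionSeries (Submodule R X)) (hh : s.head = ⊥) (hl : s.last = ⊤) :
    Order.krullDim (Submodule R X) = (s.length : ℕ) := by
  apply le_antisymm
  · rw [Order.krullDim_eq_iSup_length]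
    rw [show ((s.length : ℕ) : WithBot ℕ∞) = ((s.length : ℕ∞) : WithBot ℕ∞) from rfl,
      WithBot.coe_le_coe]
    exact iSup_le fun p => Nat.cast_le.mpr (aux_ltSeries_le s hh hl p)
  · exact Order.LTSeries.length_le_krullDim ⟨s.length, s.toFun, fun i => s.lt_succ i⟩

end JHAux

section Additivity

variable {R : Type*} [Ring R] {X : Type*} [AddCommGroup X] [Module R X]

lemma aux_covBy_map_subtype (S : Submodule R X) {a b : Submodule R ↥S} (h : a ⋖ b) :
    a.map S.subtype ⋖ b.map S.subtype := by
  have hinj : Function.Injective S.subtype := S.injective_subtype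
  constructor
  · exact Submodule.map_strictMono_of_injective hinj h.1
  · intro c hc1 hc2
    have hcS : c ≤ S := hc2.le.trans (Submodule.map_subtype_le S b)
    have hc : (Submodule.comap S.subtype c).map S.subtype = c := by
      rw [Submodule.map_comap_subtype, inf_eq_right.mpr hcS]
    have h1 : a < Submodule.comap S.subtype c := by
      rcases lt_iff_le_and_ne.mp hc1 with ⟨hle, hne⟩
      refine lt_of_le_of_ne ?_ ?_
      · rw [← Submodule.comap_map_eq_of_injective hinj a]
        exact Submodule.comap_mono hle
      · rintro rfl; exact hne hc
    have h2 : Submodule.comap S.subtype c < b := by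
      rcases lt_iff_le_and_ne.mp hc2 with ⟨hle, hne⟩
      refine lt_of_le_of_ne ?_ ?_
      · rw [← Submodule.comap_map_eq_of_injective hinj b]
        exact Submodule.comap_mono hle
      · rintro h'; exact hne (by rw [← hc, h'])
    exact h.2 h1 h2

lemma aux_covBy_comap_mkQ (S : Submodule R X) {a b : Submodule R (X ⧸ S)} (h : a ⋖ b) :
    a.comap S.mkQ ⋖ b.comap S.mkQ := by
  have hsurj : Function.Surjective S.mkQ := S.mkQ_surjective
  constructor
  · rcases lt_iff_le_and_ne.mp h.1 with ⟨hle, hne⟩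
    exact lt_of_le_of_ne (Submodule.comap_mono hle)
      (fun h' => hne (Submodule.comap_injective_of_surjective hsurj h'))
  · intro c hc1 hc2
    have hSc : S ≤ c := by
      refine le_trans ?_ hc1.le
      intro y hy
      show S.mkQ y ∈ a
      rw [show S.mkQ y = 0 from (Submodule.Quotient.mk_eq_zero S).mpr hy]
      exact a.zero_mem
    have hc : (Submodule.map S.mkQ c).comap S.mkQ = c := by
      rw [Submodule.comap_map_eq, Submodule.ker_mkQ, sup_eq_left.mpr hSc]
    have h1 : a < Submodule.map S.mkQ c := by
      rcases lt_iff_le_and_ne.mp hc1 with ⟨hle, hne⟩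
      refine lt_of_le_of_ne ?_ ?_
      · rw [← Submodule.map_comap_eq_of_surjective hsurj a]
        exact Submodule.map_mono hle
      · rintro h'; exact hne (by rw [h', hc])
    have h2 : Submodule.map S.mkQ c < b := by
      rcases lt_iff_le_and_ne.mp hc2 with ⟨hle, hne⟩
      refine lt_of_le_of_ne ?_ ?_
      · rw [← Submodule.map_comap_eq_of_surjective hsurj b]
        exact Submodule.map_mono (hc ▸ hle)
      · rintro rfl; exact hne hc.symm
    exact h.2 h1 h2

/-- Additivity of length for a submodule `S ≤ X`. -/
lemma aux_additive [IsNoetherian R X] [IsArtinian R X] (S : Submodule R X) :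
    ∃ a b : ℕ, Order.krullDim (Submodule R ↥S) = (a : ℕ) ∧
      Order.krullDim (Submodule R (X ⧸ S)) = (b : ℕ) ∧
      Order.krullDim (Submodule R X) = ((a + b : ℕ) : ℕ) := by
  obtain ⟨s, hs1, hs2⟩ := exists_compositionSeries_of_isNoetherian_isArtinian R ↥S
  obtain ⟨t, ht1, ht2⟩ := exists_compositionSeries_of_isNoetherian_isArtinian R (X ⧸ S)
  refine ⟨s.length, t.length, aux_krullDim_eq s hs1 hs2, aux_krullDim_eq t ht1 ht2, ?_⟩
  let f : SetRel.Hom {(x, y) : Submodule R ↥S × Submodule R ↥S | JordanHolderLattice.IsMaximal x y}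
      {(x, y) : Submodule R X × Submodule R X | JordanHolderLattice.IsMaximal x y} :=
    ⟨fun p => p.map S.subtype, fun h => aux_covBy_map_subtype S h⟩
  let g : SetRel.Hom
      {(x, y) : Submodule R (X ⧸ S) × Submodule R (X ⧸ S) | JordanHolderLattice.IsMaximal x y}
      {(x, y) : Submodule R X × Submodule R X | JordanHolderLattice.IsMaximal x y} :=
    ⟨fun p => p.comap S.mkQ, fun h => aux_covBy_comap_mkQ S h⟩
  have hconnect : (s.map f).last = (t.map g).head := by
    rw [RelSeries.last_map, RelSeries.head_map, hs2, ht1]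
    show Submodule.map S.subtype ⊤ = Submodule.comap S.mkQ ⊥
    rw [Submodule.map_subtype_top, Submodule.comap_bot, Submodule.ker_mkQ]
  let u := (s.map f).smash (t.map g) hconnect
  have hu := aux_krullDim_eq u
    (by simp only [u, RelSeries.head_smash, RelSeries.head_map, hs1]
        exact Submodule.map_bot _)
    (by simp only [u, RelSeries.last_smash, RelSeries.last_map, ht2]
        exact Submodule.comap_top _)
  have hlen : u.length = s.length + t.length := by simp [u]
  rw [hu, hlen]

end Additivity

section Main

variable {R : Type*} [CommRing R]

lemma aux_iso (I : Ideal R) (x : R) (k : ℕ) :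
    Nonempty
      ((↥(I ⊔ Ideal.span {x ^ k}) ⧸
          Submodule.comap (I ⊔ Ideal.span {x ^ k}).subtype
            ((I ⊔ Ideal.span {x ^ (k + 1)}).restrictScalars R)) ≃ₗ[R]
        R ⧸ (I.colon (Ideal.span {x ^ k}) ⊔ Ideal.span {x})) := by
  set N := I ⊔ Ideal.span {x ^ k} with hN
  set M := I ⊔ Ideal.span {x ^ (k + 1)} with hM
  set K := Submodule.comap N.subtype (M.restrictScalars R) with hK
  have hxkN : x ^ k ∈ N := Submodule.mem_sup_right (Ideal.subset_span rfl)
  let μ : R →ₗ[R] R := LinearMap.toSpanSingleton R R (x ^ k)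
  have hmem : ∀ r : R, μ r ∈ N := fun r => N.smul_mem r hxkN
  let ψ : R →ₗ[R] ↥N := LinearMap.codRestrict N μ hmem
  let φ : R →ₗ[R] ↥N ⧸ K := K.mkQ ∘ₗ ψ
  have hφmem : ∀ r : R, (φ r = 0 ↔ r * x ^ k ∈ M) := by
    intro r
    show K.mkQ (ψ r) = 0 ↔ _
    rw [Submodule.mkQ_apply, Submodule.Quotient.mk_eq_zero]
    show (ψ r : R) ∈ M ↔ _
    show r • x ^ k ∈ M ↔ _
    rw [smul_eq_mul]
  have hker : LinearMap.ker φ = I.colon (Ideal.span {x ^ k}) ⊔ Ideal.span {x} := by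
    ext r
    rw [LinearMap.mem_ker, hφmem r]
    constructor
    · intro hm
      obtain ⟨i, hi, c, hc, hic⟩ := Submodule.mem_sup.mp hm
      obtain ⟨s, hs⟩ := Ideal.mem_span_singleton'.mp hc
      have hcol : r - s * x ∈ I.colon (Ideal.span {x ^ k}) := by
        rw [Ideal.mem_colon_span_singleton]
        have : (r - s * x) * x ^ k = r * x ^ k - s * x ^ (k + 1) := by ring
        rw [this, ← hic, ← hs]
        have : i + s * x ^ (k + 1) - s * x ^ (k + 1) = i := by ring
        rw [this]
        exact hi
      have : r = (r - s * x) + s * x := by ring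
      rw [this]
      exact Submodule.add_mem _ (Submodule.mem_sup_left hcol)
        (Submodule.mem_sup_right (Ideal.mem_span_singleton'.mpr ⟨s, rfl⟩))
    · intro hr
      obtain ⟨c, hc, d, hd, hcd⟩ := Submodule.mem_sup.mp hr
      obtain ⟨s, hs⟩ := Ideal.mem_span_singleton'.mp hd
      rw [← hcd, add_mul]
      refine Submodule.add_mem _ (Submodule.mem_sup_left (Ideal.mem_colon_span_singleton.mp hc)) ?_
      refine Submodule.mem_sup_right (Ideal.mem_span_singleton'.mpr ⟨s, ?_⟩)
      rw [← hs]; ring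
  have hsurj : Function.Surjective φ := by
    intro y
    obtain ⟨⟨z, hz⟩, rfl⟩ := K.mkQ_surjective y
    obtain ⟨i, hi, c, hc, hic⟩ := Submodule.mem_sup.mp hz
    obtain ⟨r, hr⟩ := Ideal.mem_span_singleton'.mp hc
    refine ⟨r, ?_⟩
    show K.mkQ (ψ r) = K.mkQ ⟨z, hz⟩
    rw [← sub_eq_zero, ← map_sub, Submodule.mkQ_apply, Submodule.Quotient.mk_eq_zero]
    show ((ψ r - ⟨z, hz⟩ : ↥N) : R) ∈ M
    have hval : ((ψ r - ⟨z, hz⟩ : ↥N) : R) = r * x ^ k - z := by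
      show r • x ^ k - z = r * x ^ k - z
      rw [smul_eq_mul]
    rw [hval, hr, ← hic]
    have : c - (i + c) = -i := by ring
    rw [this]
    exact Submodule.neg_mem _ (Submodule.mem_sup_left hi)
  exact ⟨(φ.quotKerEquivOfSurjective hsurj).symm ≪≫ₗ Submodule.quotEquivOfEq _ _ hker⟩

lemma aux_qlen_eq (I : Ideal R) (n : ℕ)
    (h : Order.krullDim (Submodule R (R ⧸ I)) = (n : ℕ)) : qlen I = n := by
  rw [qlen, h, show ((n : ℕ) : WithBot ℕ∞) = ((n : ℕ∞) : WithBot ℕ∞) from rfl,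
    WithBot.unbotD_coe]
  simp

end Main

/-- `(I + (x^k))/(I + (x^{k+1})) ≅ R/((I : x^k) + (x))`, and the
resulting additivity of lengths when all the quotients have finite length. -/
theorem stmt1 {R : Type*} [CommRing R] [IsNoetherianRing R] (I : Ideal R) (x : R) :
    (∀ k : ℕ, Nonempty
      ((↥(I ⊔ Ideal.span {x ^ k}) ⧸
          Submodule.comap (I ⊔ Ideal.span {x ^ k}).subtype
            ((I ⊔ Ideal.span {x ^ (k + 1)}).restrictScalars R)) ≃ₗ[R]
        R ⧸ (I.colon (Ideal.span {x ^ k}) ⊔ Ideal.span {x}))) ∧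
    ((∀ n : ℕ, IsFiniteLength R (R ⧸ (I ⊔ Ideal.span {x ^ n}))) →
      ∀ k : ℕ,
        qlen (I ⊔ Ideal.span {x ^ (k + 1)}) =
          qlen (I ⊔ Ideal.span {x ^ k}) +
            qlen (I.colon (Ideal.span {x ^ k}) ⊔ Ideal.span {x})) := by
  refine ⟨aux_iso I x, ?_⟩
  intro hfin k
  have hMN : (I ⊔ Ideal.span {x ^ (k + 1)}) ≤ I ⊔ Ideal.span {x ^ k} :=
    sup_le_sup_left (Ideal.span_singleton_le_span_singleton.mpr (pow_dvd_pow x k.le_succ)) I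
  set N := I ⊔ Ideal.span {x ^ k} with hN
  set M := I ⊔ Ideal.span {x ^ (k + 1)} with hM
  set J := I.colon (Ideal.span {x ^ k}) ⊔ Ideal.span {x} with hJ
  obtain ⟨hNoeth, hArt⟩ := isFiniteLength_iff_isNoetherian_isArtinian.mp (hfin (k + 1))
  set S : Submodule R (R ⧸ M) := Submodule.map M.mkQ N with hS
  obtain ⟨a, b, ha, hb, hab⟩ := aux_additive S
  have h1 : qlen M = a + b := aux_qlen_eq M (a + b) (by exact_mod_cast hab)
  have h2 : qlen N = b := by
    refine aux_qlen_eq N b ?_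
    rw [← hb]
    exact Order.krullDim_eq_of_orderIso
      (Submodule.orderIsoMapComap
        (Submodule.quotientQuotientEquivQuotient M N hMN)).symm
  have h3 : qlen J = a := by
    refine aux_qlen_eq J a ?_
    rw [← ha]
    let ψ2 : ↥N →ₗ[R] ↥S :=
      LinearMap.codRestrict S (M.mkQ ∘ₗ N.subtype) (fun c => Submodule.mem_map_of_mem c.2)
    have hsurj2 : Function.Surjective ψ2 := by
      rintro ⟨y, hy⟩
      obtain ⟨n, hn, rfl⟩ := Submodule.mem_map.mp hy
      exact ⟨⟨n, hn⟩, rfl⟩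
    have hker2 : LinearMap.ker ψ2 = Submodule.comap N.subtype (M.restrictScalars R) := by
      rw [LinearMap.ker_codRestrict, LinearMap.ker_comp, Submodule.ker_mkQ,
        Submodule.restrictScalars_self]
    have e3 : (↥S) ≃ₗ[R] (↥N ⧸ Submodule.comap N.subtype (M.restrictScalars R)) :=
      (ψ2.quotKerEquivOfSurjective hsurj2).symm ≪≫ₗ Submodule.quotEquivOfEq _ _ hker2
    have eS : (↥S) ≃ₗ[R] R ⧸ J := e3 ≪≫ₗ Classical.choice (aux_iso I x k)
    exact Order.krullDim_eq_of_orderIso (Submodule.orderIsoMapComap eS.symm)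
  rw [h1, h2, h3]
  omega
end

section
/- Let (R, m) be a Noetherian local ring of characteristic p > 0 with a test element c, and let I, J be proper ideals of R. Then the tight closure I* equals the intersection over all q = p^e of the tight closures (I + J^{[q]})*. -/
open Filter IsLocalRing

section Aux

variable {R : Type*} [CommRing R]

lemma mem_fpow_of_mem {I : Ideal R} {a : R} (ha : a ∈ I) (q : ℕ) : a ^ q ∈ fpow I q :=
  Ideal.subset_span ⟨a, ha, rfl⟩

lemma fpow_mono {I K : Ideal R} (h : I ≤ K) (q : ℕ) : fpow I q ≤ fpow K q :=
  Ideal.span_mono (Set.image_mono h)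

lemma fpow_le_pow (I : Ideal R) (q : ℕ) : fpow I q ≤ I ^ q := by
  rw [fpow, Ideal.span_le]
  rintro _ ⟨a, ha, rfl⟩
  exact Ideal.pow_mem_pow ha q

lemma tc_mono (p : ℕ) {I K : Ideal R} (h : I ≤ K) :
    tightClosure p I ≤ tightClosure p K := by
  apply Ideal.span_mono
  rintro x ⟨c, hcmin, e₀, he⟩
  exact ⟨c, hcmin, e₀, fun e he' => fpow_mono h _ (he e he')⟩

variable (p : ℕ) [hp : Fact p.Prime] [CharP R p]

lemma fpow_sup_le (I K : Ideal R) (e : ℕ) :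
    fpow (I ⊔ K) (p ^ e) ≤ fpow I (p ^ e) ⊔ fpow K (p ^ e) := by
  rw [fpow, Ideal.span_le]
  rintro _ ⟨z, hz, rfl⟩
  obtain ⟨a, ha, b, hb, rfl⟩ := Submodule.mem_sup.mp hz
  simp only
  rw [add_pow_char_pow]
  exact Submodule.add_mem_sup (mem_fpow_of_mem ha _) (mem_fpow_of_mem hb _)

lemma fpow_fpow_le (J : Ideal R) (q e : ℕ) :
    fpow (fpow J q) (p ^ e) ≤ fpow J (q * p ^ e) := by
  rw [fpow, Ideal.span_le]
  rintro _ ⟨z, hz, rfl⟩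
  simp only
  induction hz using Submodule.span_induction with
  | mem w hw =>
    obtain ⟨a, ha, rfl⟩ := hw
    rw [← pow_mul]
    exact mem_fpow_of_mem ha _
  | zero => simp [zero_pow (pow_ne_zero e hp.out.ne_zero)]
  | add w v _ _ hw hv => rw [add_pow_char_pow]; exact add_mem hw hv
  | smul r w _ hw =>
    rw [smul_eq_mul, mul_pow]
    exact Ideal.mul_mem_left _ _ hw

end Aux

/-- Krull intersection: `⋂ n (K ⊔ J ^ n) = K` in a Noetherian local ring for `J ≠ ⊤`. -/
lemma krull_sup {R : Type*} [CommRing R] [IsNoetherianRing R] [IsLocalRing R]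
    (K J : Ideal R) (hJ : J ≠ ⊤) : (⨅ n : ℕ, (K ⊔ J ^ n)) = K := by
  refine le_antisymm ?_ (le_iInf fun n => le_sup_left)
  intro x hx
  haveI : Module.Finite R (R ⧸ K) :=
    Module.Finite.of_surjective (K.mkQ) (Submodule.mkQ_surjective K)
  have hb : (⨅ i : ℕ, J ^ i • ⊤ : Submodule R (R ⧸ K)) = ⊥ :=
    J.iInf_pow_smul_eq_bot_of_isLocalRing hJ
  have hmem : (Ideal.Quotient.mk K x : R ⧸ K) ∈ (⨅ i : ℕ, J ^ i • ⊤ : Submodule R (R ⧸ K)) := by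
    rw [Submodule.mem_iInf]
    intro n
    have hxn : x ∈ K ⊔ J ^ n := (Submodule.mem_iInf _).mp hx n
    obtain ⟨a, ha, b, hb', rfl⟩ := Submodule.mem_sup.mp hxn
    rw [map_add, Ideal.Quotient.eq_zero_iff_mem.mpr ha, zero_add]
    have hbq : (Ideal.Quotient.mk K) b = b • (1 : R ⧸ K) := by
      rw [← mul_one b, map_mul, mul_one]
      rfl
    rw [hbq]
    exact Submodule.smul_mem_smul hb' Submodule.mem_top
  rw [hb, Submodule.mem_bot] at hmem
  exact Ideal.Quotient.eq_zero_iff_mem.mp hmem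

/-- With a test element, `I* = ⋂_q (I + J^{[q]})*` for proper ideals `I, J`. -/
theorem stmt3 {R : Type*} [CommRing R] [IsNoetherianRing R] [IsLocalRing R]
    (p : ℕ) (hp : p.Prime) [CharP R p] (c : R) (hc : IsTestElement p c)
    (I J : Ideal R) (hI : I ≠ ⊤) (hJ : J ≠ ⊤) :
    tightClosure p I = ⨅ e : ℕ, tightClosure p (I ⊔ fpow J (p ^ e)) := by
  haveI : Fact p.Prime := ⟨hp⟩
  refine le_antisymm (le_iInf fun e => tc_mono p le_sup_left) ?_
  intro x hx
  rw [hc.2 I x]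
  intro e'
  -- show `c * x ^ p ^ e' ∈ fpow I (p ^ e')` using Krull intersection
  rw [← krull_sup (fpow I (p ^ e')) J hJ, Submodule.mem_iInf]
  intro n
  have hxq : c * x ^ p ^ e' ∈ fpow (I ⊔ fpow J (p ^ n)) (p ^ e') := by
    have := (Submodule.mem_iInf _).mp hx n
    exact (hc.2 (I ⊔ fpow J (p ^ n)) x).mp this e'
  have h1 : fpow (I ⊔ fpow J (p ^ n)) (p ^ e') ≤ fpow I (p ^ e') ⊔ J ^ n := by
    refine le_trans (fpow_sup_le p _ _ _) (sup_le_sup_left ?_ _)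
    refine le_trans (fpow_fpow_le p J _ _) ?_
    refine le_trans (fpow_le_pow J _) (Ideal.pow_le_pow_right ?_)
    calc n ≤ p ^ n := Nat.le_of_lt (Nat.lt_pow_self (n := n) hp.one_lt)
    _ ≤ p ^ n * p ^ e' := Nat.le_mul_of_pos_right _ (Nat.pow_pos (n := e') hp.pos)
  exact h1 hxq
end

section
/- Let (R, m) be a Noetherian local ring of characteristic p > 0 with a test element c, I an ideal, and x ∈ R. Suppose that for every power q = p^e there exists an ideal I_q with I^{[q]} ⊆ I_q ⊆ (I^{[q]})* such that x is a nonzerodivisor modulo I_q. Then x is a nonzerodivisor modulo (I^{[q]})* for every q. -/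
open Filter IsLocalRing

section Aux

variable {R : Type*} [CommRing R]

lemma fpow_one_aux (J : Ideal R) : fpow J 1 = J := by
  simp only [fpow, pow_one]
  rw [Set.image_id', Ideal.span_eq]

lemma fpow_eq_map (p : ℕ) [hp : Fact p.Prime] [CharP R p] (I : Ideal R) (e : ℕ) :
    fpow I (p ^ e) = Ideal.map (iterateFrobenius R p e) I := by
  rw [Ideal.map, fpow]
  congr 1

lemma fpow_fpow (p : ℕ) (hp : p.Prime) [CharP R p] (I : Ideal R) (e f : ℕ) :
    fpow (fpow I (p ^ e)) (p ^ f) = fpow I (p ^ (e + f)) := by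
  haveI : Fact p.Prime := ⟨hp⟩
  rw [fpow_eq_map p I e, fpow_eq_map p _ f, fpow_eq_map p I (e + f),
    Ideal.map_map, add_comm e f, iterateFrobenius_add]

lemma pow_regular {J : Ideal R} {x : R} (hx : ∀ a : R, x * a ∈ J → a ∈ J) :
    ∀ (n : ℕ) (a : R), x ^ n * a ∈ J → a ∈ J := by
  intro n
  induction n with
  | zero => intro a ha; simpa using ha
  | succ n ih =>
    intro a ha
    apply ih
    apply hx
    rw [← mul_assoc, ← pow_succ']
    exact ha

end Aux

/-- If for each `q = p^e` there is an ideal `I_q` with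
`I^{[q]} ⊆ I_q ⊆ (I^{[q]})*` and `x` a nonzerodivisor modulo `I_q`, then `x` is a
nonzerodivisor modulo `(I^{[q]})*` for every `q`. -/
theorem stmt4 {R : Type*} [CommRing R] [IsNoetherianRing R] [IsLocalRing R]
    (p : ℕ) (hp : p.Prime) [CharP R p] (c : R) (hc : IsTestElement p c)
    (I : Ideal R) (x : R)
    (h : ∀ e : ℕ, ∃ Iq : Ideal R,
      fpow I (p ^ e) ≤ Iq ∧ Iq ≤ tightClosure p (fpow I (p ^ e)) ∧
        ∀ a : R, x * a ∈ Iq → a ∈ Iq) :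
    ∀ e : ℕ, ∀ a : R,
      x * a ∈ tightClosure p (fpow I (p ^ e)) → a ∈ tightClosure p (fpow I (p ^ e)) := by
  intro e a hxa
  apply Ideal.subset_span
  refine ⟨c ^ 2, ?_, 0, fun f _ => ?_⟩
  · intro P hP hmem
    have hprime : P.IsPrime := hP.1.1
    exact hc.1 P hP (hprime.mem_of_pow_mem 2 hmem)
  · -- goal : c ^ 2 * a ^ p ^ f ∈ fpow (fpow I (p ^ e)) (p ^ f)
    have h1 := (hc.2 (fpow I (p ^ e)) (x * a)).mp hxa f
    rw [fpow_fpow p hp I e f] at h1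
    obtain ⟨Iq, hle, hle', hreg⟩ := h (e + f)
    have h2 : x ^ p ^ f * (c * a ^ p ^ f) ∈ Iq := by
      apply hle
      convert h1 using 1
      ring
    have h3 : c * a ^ p ^ f ∈ tightClosure p (fpow I (p ^ (e + f))) :=
      hle' (pow_regular hreg (p ^ f) _ h2)
    have h4 := (hc.2 (fpow I (p ^ (e + f))) (c * a ^ p ^ f)).mp h3 0
    rw [pow_zero, pow_one, fpow_one_aux] at h4
    rw [fpow_fpow p hp I e f]
    convert h4 using 1
    ring
end
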